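/- The map z ↦ (1/r)·J(z) = (z + 1/z)/(2r) maps the domain 𝒜_r into the open unit disc, and for every w in the open unit disc the equation (z + 1/z)/(2r) = w has exactly two solutions in 𝒜_r counted with multiplicity. -/

import Mathlib

open Complex

def domA (r : ℝ) : Set ℂ := {z : ℂ | z ≠ 0 ∧ ‖z + 1/z‖ < 2*r}

noncomputable def Jk (z : ℂ) : ℂ := (z + 1/z)/2

theorem scaled_joukowsky_proper_two_to_one (r : ℝ) (hr : 1 < r) :
    Set.MapsTo (fun z : ℂ => Jk z / r) (domA r) {w : ℂ | ‖w‖ < 1} ∧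
    ∀ w : ℂ, ‖w‖ < 1 →
      ∃ z₁ z₂ : ℂ, z₁ ∈ domA r ∧ z₂ ∈ domA r ∧
        (∀ z : ℂ, z^2 - 2*(r:ℂ)*w*z + 1 = (z - z₁) * (z - z₂)) ∧
        Jk z₁ / r = w ∧ Jk z₂ / r = w := by
  have hr0 : (0:ℝ) < r := lt_trans one_pos hr
  have hrne : (r:ℂ) ≠ 0 := by
    exact_mod_cast ne_of_gt hr0
  constructor
  · intro z hz
    obtain ⟨hz0, hzabs⟩ := hz
    simp only [Set.mem_setOf_eq, Jk]
    rw [norm_div, norm_div]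
    simp only [Complex.norm_two, Complex.norm_real, Real.norm_eq_abs, abs_of_pos hr0]
    rw [div_div, div_lt_one (by positivity)]
    exact hzabs
  · intro w hw
    set c : ℂ := (r:ℂ) * w with hc
    obtain ⟨s, hs⟩ : ∃ s : ℂ, s^2 = c^2 - 1 :=
      ⟨(c^2-1)^(((2:ℕ):ℂ))⁻¹, Complex.cpow_nat_inv_pow _ two_ne_zero⟩
    set z₁ : ℂ := c + s with hz1
    set z₂ : ℂ := c - s with hz2
    have hprod : z₁ * z₂ = 1 := by
      rw [hz1, hz2]; ring_nf; rw [hs]; ring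
    have h1ne : z₁ ≠ 0 := by
      intro h; rw [h, zero_mul] at hprod; exact zero_ne_one hprod
    have h2ne : z₂ ≠ 0 := by
      intro h; rw [h, mul_zero] at hprod; exact zero_ne_one hprod
    have hinv1 : 1 / z₁ = z₂ := by
      field_simp; exact hprod.symm
    have hinv2 : 1 / z₂ = z₁ := by
      field_simp; rw [mul_comm]; exact hprod.symm
    have hsum1 : z₁ + 1 / z₁ = 2 * c := by rw [hinv1, hz1, hz2]; ring
    have hsum2 : z₂ + 1 / z₂ = 2 * c := by rw [hinv2, hz1, hz2]; ring
    have habs : ‖2 * c‖ < 2 * r := by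
      rw [hc, norm_mul, norm_mul]
      simp only [Complex.norm_real, Real.norm_eq_abs, Complex.norm_two, abs_of_pos hr0]
      calc 2 * (r * ‖w‖) < 2 * (r * 1) := by
            apply mul_lt_mul_of_pos_left (mul_lt_mul_of_pos_left hw hr0) two_pos
        _ = 2 * r := by ring
    have hJ1 : Jk z₁ / r = w := by
      rw [Jk, hsum1, hc]; field_simp
    have hJ2 : Jk z₂ / r = w := by
      rw [Jk, hsum2, hc]; field_simp
    refine ⟨z₁, z₂, ⟨h1ne, by rw [hsum1]; exact habs⟩,
      ⟨h2ne, by rw [hsum2]; exact habs⟩, ?_, hJ1, hJ2⟩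
    intro z
    have : z₁ + z₂ = 2 * c := by rw [hz1, hz2]; ring
    calc z^2 - 2*(r:ℂ)*w*z + 1 = z^2 - (z₁ + z₂)*z + z₁*z₂ := by
          rw [this, hprod, hc]; ring
      _ = (z - z₁)*(z - z₂) := by ring
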